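/- Let $f:\mathbb{R}^n\to\mathbb{R}$ be a smooth function, $a\in\mathbb{R}^n$, and let $p$ be a point with $\operatorname{grad} f(p)\ne 0$, $p\ne a$, and $p-a$ parallel to $\operatorname{grad} f(p)$. Suppose further that $p$ is a non-degenerate critical point both of $f$ restricted to the sphere $S=\{x : \|x-a\|=\|p-a\|\}$ and of $r_a(x)=\|x-a\|$ restricted to $M=f^{-1}(f(p))$. If $\langle p-a, \operatorname{grad} f(p)\rangle > 0$ (i.e. $f$ increases in the outward radial direction at $p$), then $p$ is a local maximum of $f|_S$ if and only if $p$ is a local minimum of $r_a|_M$, and $p$ is a local minimum of $f|_S$ if and only if $p$ is a local maximum of $r_a|_M$. -/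

import Mathlib

open scoped RealInnerProductSpace

/-- `p` is a non-degenerate critical point of the restriction of `g` to the level set
`h⁻¹(h p)` (at a point where the level set is regular, criticality is the Lagrange
condition `∇g p = μ • ∇h p`, and non-degeneracy means that the bilinear form
`Hess(g - μ h)` restricted to the tangent space `(∇h p)^⊥` is non-degenerate). -/
def IsNondegenerateCritPtOn {n : ℕ} (h g : EuclideanSpace ℝ (Fin n) → ℝ)
    (p : EuclideanSpace ℝ (Fin n)) : Prop :=
  ∃ μ : ℝ, gradient g p = μ • gradient h p ∧
    ∀ w : EuclideanSpace ℝ (Fin n), w ≠ 0 → ⟪gradient h p, w⟫ = 0 →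
      ∃ w' : EuclideanSpace ℝ (Fin n), ⟪gradient h p, w'⟫ = 0 ∧
        iteratedFDeriv ℝ 2 (fun x => g x - μ * h x) p ![w, w'] ≠ 0

section helpers
variable {n : ℕ}
local notation "E" => EuclideanSpace ℝ (Fin n)

lemma grad_cont {f : E → ℝ} (hf : ContDiff ℝ (⊤ : ℕ∞) f) :
    Continuous fun z => gradient f z := by
  have h1 : Continuous fun z => fderiv ℝ f z := hf.continuous_fderiv (by simp)
  exact (InnerProductSpace.toDual ℝ E).symm.continuous.comp h1

lemma fderiv_apply_eq_inner {f : E → ℝ} (hf : ContDiff ℝ (⊤ : ℕ∞) f) (z v : E) :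
    fderiv ℝ f z v = ⟪gradient f z, v⟫ := by
  have h := ((hf.differentiable (by simp)) z).hasGradientAt
  rw [h.hasFDerivAt.fderiv]
  exact InnerProductSpace.toDual_apply_apply

lemma mono_ray {f : E → ℝ} (hf : ContDiff ℝ (⊤ : ℕ∞) f) {a : E} {s : Set E}
    (hs : Convex ℝ s) (hpos : ∀ z ∈ s, 0 < ⟪z - a, gradient f z⟫)
    {x y : E} (hx : x ∈ s) (hy : y ∈ s) {t : ℝ} (ht : 1 < t)
    (hxy : y - a = t • (x - a)) : f x < f y := by
  have hdf := hf.differentiable (by simp)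
  set ψ : ℝ → ℝ := fun u => f (x + u • (y - x)) with hψ
  have hmem : ∀ u ∈ Set.Icc (0:ℝ) 1, x + u • (y - x) ∈ s := by
    intro u hu
    have : x + u • (y - x) = (1 - u) • x + u • y := by module
    rw [this]
    exact hs hx hy (by linarith [hu.2]) hu.1 (by ring)
  have hderiv : ∀ u : ℝ, HasDerivAt ψ (fderiv ℝ f (x + u • (y - x)) (y - x)) u := by
    intro u
    have h1 : HasDerivAt (fun u : ℝ => x + u • (y - x)) (y - x) u := by
      simpa using ((hasDerivAt_id u).smul_const (y - x)).const_add x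
    exact ((hdf _).hasFDerivAt).comp_hasDerivAt u h1
  have hyx : y - x = (t - 1) • (x - a) := by
    have h0 : y - x = (y - a) - (x - a) := by abel
    rw [h0, hxy]; module
  have hmono : StrictMonoOn ψ (Set.Icc 0 1) := by
    apply strictMonoOn_of_deriv_pos (convex_Icc 0 1)
    · exact (hf.continuous.comp (by continuity)).continuousOn
    · intro u hu
      rw [interior_Icc] at hu
      rw [(hderiv u).deriv, fderiv_apply_eq_inner hf]
      set z := x + u • (y - x) with hz
      have hza : z - a = (1 + u * (t - 1)) • (x - a) := by
        rw [hz, hyx]; module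
      have hcoef : 0 < 1 + u * (t - 1) := by nlinarith [hu.1, hu.2]
      have hp := hpos z (hmem u ⟨hu.1.le, hu.2.le⟩)
      rw [hza, real_inner_smul_left] at hp
      have hxa : 0 < ⟪x - a, gradient f z⟫ := by nlinarith
      rw [hyx, real_inner_smul_right, real_inner_comm]
      nlinarith
  have h01 := hmono (Set.left_mem_Icc.mpr zero_le_one) (Set.right_mem_Icc.mpr zero_le_one)
    zero_lt_one
  simpa [hψ] using h01


lemma good_ball {f : E → ℝ} (hf : ContDiff ℝ (⊤ : ℕ∞) f) {a p : E}
    (hsign : 0 < ⟪p - a, gradient f p⟫) :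
    ∃ ε > 0, ∀ z ∈ Metric.ball p ε, 0 < ⟪z - a, gradient f z⟫ := by
  have hG : Continuous fun z : E => ⟪z - a, gradient f z⟫ :=
    (continuous_id.sub continuous_const).inner (grad_cont hf)
  have hopen : IsOpen {z : E | 0 < ⟪z - a, gradient f z⟫} :=
    isOpen_lt continuous_const hG
  obtain ⟨ε, hε, hb⟩ := Metric.isOpen_iff.mp hopen p hsign
  exact ⟨ε, hε, fun z hz => hb hz⟩


lemma implA {f : E → ℝ} (hf : ContDiff ℝ (⊤ : ℕ∞) f) {a p : E} (hpa : p ≠ a)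
    (hsign : 0 < ⟪p - a, gradient f p⟫)
    (hmax : IsLocalMaxOn f (Metric.sphere a ‖p - a‖) p) :
    IsLocalMinOn (fun x => ‖x - a‖) (f ⁻¹' {f p}) p := by
  set r := ‖p - a‖ with hrdef
  have hr : 0 < r := norm_pos_iff.mpr (sub_ne_zero.mpr hpa)
  obtain ⟨ε₀, hε₀, hgood⟩ := good_ball hf hsign
  obtain ⟨δ, hδ, hmax'⟩ := Metric.mem_nhdsWithin_iff.mp hmax
  set ε := min (min ε₀ δ) r / 2 with hεdef
  have hε : 0 < ε := by positivity
  have h2ε₀ : 2 * ε ≤ ε₀ := by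
    have := min_le_left (min ε₀ δ) r; have := min_le_left ε₀ δ; simp only [hεdef]; linarith
  have h2δ : 2 * ε ≤ δ := by
    have := min_le_left (min ε₀ δ) r; have := min_le_right ε₀ δ; simp only [hεdef]; linarith
  have h2r : 2 * ε ≤ r := by
    have := min_le_right (min ε₀ δ) r; simp only [hεdef]; linarith
  apply Metric.mem_nhdsWithin_iff.mpr ⟨ε, hε, ?_⟩
  rintro x ⟨hxball, hxM⟩
  have hxf : f x = f p := hxM
  show r ≤ ‖x - a‖
  by_contra hcon
  push_neg at hcon
  have hxp : ‖x - p‖ < ε := (mem_ball_iff_norm.mp hxball)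
  have hxa_lb : r - ε < ‖x - a‖ := by
    have h1 : ‖p - a‖ - ‖x - a‖ ≤ ‖p - x‖ := by
      calc ‖p - a‖ - ‖x - a‖ ≤ ‖(p - a) - (x - a)‖ := norm_sub_norm_le _ _
      _ = ‖p - x‖ := by congr 1; abel
    have h2 : ‖p - x‖ = ‖x - p‖ := norm_sub_rev _ _
    linarith
  have hxa_pos : 0 < ‖x - a‖ := by linarith
  set t := r / ‖x - a‖ with htdef
  have ht : 1 < t := (one_lt_div hxa_pos).mpr hcon
  set y := a + t • (x - a) with hydef
  have hya : y - a = t • (x - a) := by rw [hydef]; abel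
  have hynorm : ‖y - a‖ = r := by
    rw [hya, norm_smul, htdef, Real.norm_eq_abs, abs_of_pos (by positivity)]
    field_simp
  have hyx : ‖y - x‖ = r - ‖x - a‖ := by
    have h1 : y - x = (t - 1) • (x - a) := by rw [hydef]; module
    rw [h1, norm_smul, Real.norm_eq_abs, abs_of_pos (by linarith)]
    rw [htdef]; field_simp
  have hyp : ‖y - p‖ < 2 * ε := by
    have h1 : ‖y - p‖ ≤ ‖y - x‖ + ‖x - p‖ := norm_sub_le_norm_sub_add_norm_sub _ _ _
    have h2 : r - ‖x - a‖ ≤ ‖x - p‖ := by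
      have h3 : ‖p - a‖ - ‖x - a‖ ≤ ‖p - x‖ := by
        calc ‖p - a‖ - ‖x - a‖ ≤ ‖(p - a) - (x - a)‖ := norm_sub_norm_le _ _
        _ = ‖p - x‖ := by congr 1; abel
      rw [norm_sub_rev p x] at h3; linarith
    linarith
  -- memberships in ball p (2ε)
  have hxmem : x ∈ Metric.ball p (2 * ε) := by
    rw [mem_ball_iff_norm]; linarith
  have hymem : y ∈ Metric.ball p (2 * ε) := mem_ball_iff_norm.mpr hyp
  have hsub : Metric.ball p (2 * ε) ⊆ Metric.ball p ε₀ :=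
    Metric.ball_subset_ball h2ε₀
  have hflt : f x < f y :=
    mono_ray hf (convex_ball p (2 * ε)) (fun z hz => hgood z (hsub hz)) hxmem hymem ht hya
  have hyle : f y ≤ f p := by
    apply hmax'
    exact ⟨Metric.ball_subset_ball h2δ hymem, mem_sphere_iff_norm.mpr hynorm⟩
  linarith [hxf ▸ hflt]


lemma implB {f : E → ℝ} (hf : ContDiff ℝ (⊤ : ℕ∞) f) {a p : E} (hpa : p ≠ a)
    (hsign : 0 < ⟪p - a, gradient f p⟫)
    (hmin : IsLocalMinOn (fun x => ‖x - a‖) (f ⁻¹' {f p}) p) :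
    IsLocalMaxOn f (Metric.sphere a ‖p - a‖) p := by
  set r := ‖p - a‖ with hrdef
  have hr : 0 < r := norm_pos_iff.mpr (sub_ne_zero.mpr hpa)
  obtain ⟨ε₀, hε₀, hgood⟩ := good_ball hf hsign
  obtain ⟨δ, hδ, hmin'⟩ := Metric.mem_nhdsWithin_iff.mp hmin
  set ε₁ := min (min ε₀ δ) r / 4 with hε₁def
  have hε₁ : 0 < ε₁ := by positivity
  have h4ε₀ : 4 * ε₁ ≤ ε₀ := by
    have := min_le_left (min ε₀ δ) r; have := min_le_left ε₀ δ; simp only [hε₁def]; linarith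
  have h4δ : 4 * ε₁ ≤ δ := by
    have := min_le_left (min ε₀ δ) r; have := min_le_right ε₀ δ; simp only [hε₁def]; linarith
  have h4r : 4 * ε₁ ≤ r := by
    have := min_le_right (min ε₀ δ) r; simp only [hε₁def]; linarith
  set c := (r - ε₁) / r with hcdef
  have hc0 : 0 < c := by
    apply div_pos (by linarith) hr
  have hc1 : c < 1 := by rw [hcdef, div_lt_one hr]; linarith
  -- the inner point q on the ray through p has f q < f p
  have hq : f (a + c • (p - a)) < f p := by
    apply mono_ray hf (convex_ball p ε₀) (fun z hz => hgood z hz)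
      (x := a + c • (p - a)) (y := p) (t := 1 / c)
    · rw [mem_ball_iff_norm]
      have : a + c • (p - a) - p = (c - 1) • (p - a) := by module
      rw [this, norm_smul, Real.norm_eq_abs, abs_of_neg (by linarith)]
      have : -(c - 1) * ‖p - a‖ = ε₁ := by
        rw [hcdef]; field_simp; rw [← hrdef]; ring
      rw [← hrdef] at this ⊢
      nlinarith
    · exact Metric.mem_ball_self (by linarith)
    · rw [lt_div_iff₀ hc0]; linarith
    · have : a + c • (p - a) - a = c • (p - a) := by abel
      rw [this, smul_smul, one_div_mul_cancel (ne_of_gt hc0), one_smul]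
  -- continuity: for x near p, f (a + c • (x - a)) < f p
  have hopen : IsOpen {x : E | f (a + c • (x - a)) < f p} := by
    apply isOpen_lt _ continuous_const
    exact hf.continuous.comp (continuous_const.add ((continuous_id.sub continuous_const).const_smul c))
  obtain ⟨ε₂', hε₂', hball2⟩ := Metric.isOpen_iff.mp hopen p hq
  set ε₂ := min ε₂' ε₁ with hε₂def
  have hε₂ : 0 < ε₂ := lt_min hε₂' hε₁
  apply Metric.mem_nhdsWithin_iff.mpr ⟨ε₂, hε₂, ?_⟩
  rintro x ⟨hxball, hxS⟩
  have hxnorm : ‖x - a‖ = r := mem_sphere_iff_norm.mp hxS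
  show f x ≤ f p
  by_contra hcon
  push_neg at hcon
  have hxp : ‖x - p‖ < ε₂ := mem_ball_iff_norm.mp hxball
  -- the segment from x to qx := a + c • (x - a)
  set z : ℝ → E := fun u => a + (1 - u * (1 - c)) • (x - a) with hzdef
  have hz0 : z 0 = x := by simp [hzdef]
  have hz1 : z 1 = a + c • (x - a) := by
    have : (1 : ℝ) - 1 * (1 - c) = c := by ring
    rw [hzdef]; dsimp only; rw [this]
  have hznorm : ∀ u ∈ Set.Icc (0:ℝ) 1, ‖z u - a‖ = (1 - u * (1 - c)) * r := by
    intro u hu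
    have h1 : z u - a = (1 - u * (1 - c)) • (x - a) := by rw [hzdef]; dsimp only; module
    rw [h1, norm_smul, Real.norm_eq_abs, hxnorm, abs_of_pos]
    nlinarith [hu.1, hu.2]
  have hzp : ∀ u ∈ Set.Icc (0:ℝ) 1, ‖z u - p‖ < 2 * ε₁ := by
    intro u hu
    have h1 : z u - x = -(u * (1 - c)) • (x - a) := by rw [hzdef]; dsimp only; module
    have h2 : ‖z u - x‖ = u * (1 - c) * r := by
      rw [h1, norm_smul, Real.norm_eq_abs, abs_of_nonpos (by nlinarith [hu.1]), hxnorm]; ring_nf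
    have h3 : ‖z u - p‖ ≤ ‖z u - x‖ + ‖x - p‖ := norm_sub_le_norm_sub_add_norm_sub _ _ _
    have h4 : (1 - c) * r = ε₁ := by rw [hcdef]; field_simp; ring
    have h5 : u * (1 - c) * r ≤ ε₁ := by nlinarith [hu.1, hu.2]
    have h6 : ε₂ ≤ ε₁ := min_le_right _ _
    linarith
  -- IVT
  have hzc : Continuous z := by
    rw [hzdef]; fun_prop
  have hψc : ContinuousOn (fun u => f (z u)) (Set.Icc 0 1) :=
    (hf.continuous.comp hzc).continuousOn
  have hq' : f (z 1) < f p := by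
    rw [hz1]
    exact hball2 (Metric.ball_subset_ball (min_le_left ε₂' ε₁) hxball)
  have hivt := intermediate_value_Icc' (zero_le_one) hψc
  have hfp_mem : f p ∈ Set.Icc (f (z 1)) (f (z 0)) := by
    rw [hz0]; exact ⟨hq'.le, hcon.le⟩
  obtain ⟨u, hu, hfu⟩ := hivt hfp_mem
  -- z u is in the level set and in ball p δ
  have hzuM : z u ∈ f ⁻¹' {f p} := hfu
  have hzuδ : z u ∈ Metric.ball p δ := by
    rw [mem_ball_iff_norm]
    have := hzp u hu
    linarith
  have hge : r ≤ ‖z u - a‖ := hmin' ⟨hzuδ, hzuM⟩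
  rw [hznorm u hu] at hge
  have hexp : (1 - u * (1 - c)) * r = r - u * (1 - c) * r := by ring
  rw [hexp] at hge
  have hu0 : u = 0 := by
    by_contra hne
    have hupos : 0 < u := lt_of_le_of_ne hu.1 (Ne.symm hne)
    have h1c : 0 < 1 - c := by linarith
    have hprod : 0 < u * (1 - c) * r := by positivity
    linarith
  rw [hu0] at hfu
  have hfx : f x = f p := by rw [← hz0]; simpa using hfu
  exact absurd hfx (ne_of_gt hcon)


lemma implC {f : E → ℝ} (hf : ContDiff ℝ (⊤ : ℕ∞) f) {a p : E} (hpa : p ≠ a)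
    (hsign : 0 < ⟪p - a, gradient f p⟫)
    (hmin : IsLocalMinOn f (Metric.sphere a ‖p - a‖) p) :
    IsLocalMaxOn (fun x => ‖x - a‖) (f ⁻¹' {f p}) p := by
  set r := ‖p - a‖ with hrdef
  have hr : 0 < r := norm_pos_iff.mpr (sub_ne_zero.mpr hpa)
  obtain ⟨ε₀, hε₀, hgood⟩ := good_ball hf hsign
  obtain ⟨δ, hδ, hmin'⟩ := Metric.mem_nhdsWithin_iff.mp hmin
  set ε := min (min ε₀ δ) r / 2 with hεdef
  have hε : 0 < ε := by positivity
  have h2ε₀ : 2 * ε ≤ ε₀ := by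
    have := min_le_left (min ε₀ δ) r; have := min_le_left ε₀ δ; simp only [hεdef]; linarith
  have h2δ : 2 * ε ≤ δ := by
    have := min_le_left (min ε₀ δ) r; have := min_le_right ε₀ δ; simp only [hεdef]; linarith
  apply Metric.mem_nhdsWithin_iff.mpr ⟨ε, hε, ?_⟩
  rintro x ⟨hxball, hxM⟩
  have hxf : f x = f p := hxM
  show ‖x - a‖ ≤ r
  by_contra hcon
  push_neg at hcon
  have hxp : ‖x - p‖ < ε := mem_ball_iff_norm.mp hxball
  have hxa_pos : 0 < ‖x - a‖ := by linarith
  set t := r / ‖x - a‖ with htdef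
  have ht01 : 0 < t := by positivity
  have ht1 : t < 1 := (div_lt_one hxa_pos).mpr hcon
  set y := a + t • (x - a) with hydef
  have hya : y - a = t • (x - a) := by rw [hydef]; abel
  have hynorm : ‖y - a‖ = r := by
    rw [hya, norm_smul, Real.norm_eq_abs, abs_of_pos ht01, htdef]
    field_simp
  have hxy : x - a = (1 / t) • (y - a) := by
    rw [hya, smul_smul]
    rw [one_div_mul_cancel (ne_of_gt ht01), one_smul]
  have ht' : 1 < 1 / t := by rw [lt_div_iff₀ ht01]; linarith
  have hyx : ‖y - x‖ = ‖x - a‖ - r := by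
    have h1 : y - x = (t - 1) • (x - a) := by rw [hydef]; module
    rw [h1, norm_smul, Real.norm_eq_abs, abs_of_neg (by linarith), htdef]
    field_simp; ring
  have hyp : ‖y - p‖ < 2 * ε := by
    have h1 : ‖y - p‖ ≤ ‖y - x‖ + ‖x - p‖ := norm_sub_le_norm_sub_add_norm_sub _ _ _
    have h2 : ‖x - a‖ - r ≤ ‖x - p‖ := by
      calc ‖x - a‖ - ‖p - a‖ ≤ ‖(x - a) - (p - a)‖ := norm_sub_norm_le _ _
      _ = ‖x - p‖ := by congr 1; abel
    linarith
  have hxmem : x ∈ Metric.ball p (2 * ε) := by rw [mem_ball_iff_norm]; linarith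
  have hymem : y ∈ Metric.ball p (2 * ε) := mem_ball_iff_norm.mpr hyp
  have hsub : Metric.ball p (2 * ε) ⊆ Metric.ball p ε₀ := Metric.ball_subset_ball h2ε₀
  have hflt : f y < f x :=
    mono_ray hf (convex_ball p (2 * ε)) (fun z hz => hgood z (hsub hz)) hymem hxmem ht' hxy
  have hyge : f p ≤ f y :=
    hmin' ⟨Metric.ball_subset_ball h2δ hymem, mem_sphere_iff_norm.mpr hynorm⟩
  linarith [hxf ▸ hflt]


lemma implD {f : E → ℝ} (hf : ContDiff ℝ (⊤ : ℕ∞) f) {a p : E} (hpa : p ≠ a)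
    (hsign : 0 < ⟪p - a, gradient f p⟫)
    (hmax : IsLocalMaxOn (fun x => ‖x - a‖) (f ⁻¹' {f p}) p) :
    IsLocalMinOn f (Metric.sphere a ‖p - a‖) p := by
  set r := ‖p - a‖ with hrdef
  have hr : 0 < r := norm_pos_iff.mpr (sub_ne_zero.mpr hpa)
  obtain ⟨ε₀, hε₀, hgood⟩ := good_ball hf hsign
  obtain ⟨δ, hδ, hmax'⟩ := Metric.mem_nhdsWithin_iff.mp hmax
  set ε₁ := min (min ε₀ δ) r / 4 with hε₁def
  have hε₁ : 0 < ε₁ := by positivity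
  have h4ε₀ : 4 * ε₁ ≤ ε₀ := by
    have := min_le_left (min ε₀ δ) r; have := min_le_left ε₀ δ; simp only [hε₁def]; linarith
  have h4δ : 4 * ε₁ ≤ δ := by
    have := min_le_left (min ε₀ δ) r; have := min_le_right ε₀ δ; simp only [hε₁def]; linarith
  have h4r : 4 * ε₁ ≤ r := by
    have := min_le_right (min ε₀ δ) r; simp only [hε₁def]; linarith
  set c := (r + ε₁) / r with hcdef
  have hc1 : 1 < c := by rw [hcdef, lt_div_iff₀ hr]; linarith
  have hc0 : 0 < c := by linarith
  -- the outer point q on the ray through p has f p < f q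
  have hq : f p < f (a + c • (p - a)) := by
    apply mono_ray hf (convex_ball p ε₀) (fun z hz => hgood z hz)
      (x := p) (y := a + c • (p - a)) (t := c)
    · exact Metric.mem_ball_self (by linarith)
    · rw [mem_ball_iff_norm]
      have h0 : a + c • (p - a) - p = (c - 1) • (p - a) := by module
      rw [h0, norm_smul, Real.norm_eq_abs, abs_of_pos (by linarith), ← hrdef]
      have : (c - 1) * r = ε₁ := by rw [hcdef]; field_simp; ring
      linarith
    · exact hc1
    · abel
  -- continuity: for x near p, f p < f (a + c • (x - a))
  have hopen : IsOpen {x : E | f p < f (a + c • (x - a))} := by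
    apply isOpen_lt continuous_const
    exact hf.continuous.comp (continuous_const.add ((continuous_id.sub continuous_const).const_smul c))
  obtain ⟨ε₂', hε₂', hball2⟩ := Metric.isOpen_iff.mp hopen p hq
  set ε₂ := min ε₂' ε₁ with hε₂def
  have hε₂ : 0 < ε₂ := lt_min hε₂' hε₁
  apply Metric.mem_nhdsWithin_iff.mpr ⟨ε₂, hε₂, ?_⟩
  rintro x ⟨hxball, hxS⟩
  have hxnorm : ‖x - a‖ = r := mem_sphere_iff_norm.mp hxS
  show f p ≤ f x
  by_contra hcon
  push_neg at hcon
  have hxp : ‖x - p‖ < ε₂ := mem_ball_iff_norm.mp hxball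
  set z : ℝ → E := fun u => a + (1 + u * (c - 1)) • (x - a) with hzdef
  have hz0 : z 0 = x := by simp [hzdef]
  have hz1 : z 1 = a + c • (x - a) := by
    have h0 : (1 : ℝ) + 1 * (c - 1) = c := by ring
    rw [hzdef]; dsimp only; rw [h0]
  have hznorm : ∀ u ∈ Set.Icc (0:ℝ) 1, ‖z u - a‖ = (1 + u * (c - 1)) * r := by
    intro u hu
    have h1 : z u - a = (1 + u * (c - 1)) • (x - a) := by rw [hzdef]; dsimp only; module
    rw [h1, norm_smul, Real.norm_eq_abs, hxnorm, abs_of_pos]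
    nlinarith [hu.1, hu.2]
  have hzp : ∀ u ∈ Set.Icc (0:ℝ) 1, ‖z u - p‖ < 2 * ε₁ := by
    intro u hu
    have h1 : z u - x = (u * (c - 1)) • (x - a) := by rw [hzdef]; dsimp only; module
    have h2 : ‖z u - x‖ = u * (c - 1) * r := by
      rw [h1, norm_smul, Real.norm_eq_abs, abs_of_nonneg (by nlinarith [hu.1]), hxnorm]
    have h3 : ‖z u - p‖ ≤ ‖z u - x‖ + ‖x - p‖ := norm_sub_le_norm_sub_add_norm_sub _ _ _
    have h4 : (c - 1) * r = ε₁ := by rw [hcdef]; field_simp; ring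
    have h5 : u * (c - 1) * r ≤ ε₁ := by nlinarith [hu.1, hu.2]
    have h6 : ε₂ ≤ ε₁ := min_le_right _ _
    linarith
  have hzc : Continuous z := by
    rw [hzdef]; fun_prop
  have hψc : ContinuousOn (fun u => f (z u)) (Set.Icc 0 1) :=
    (hf.continuous.comp hzc).continuousOn
  have hq' : f p < f (z 1) := by
    rw [hz1]
    exact hball2 (Metric.ball_subset_ball (min_le_left ε₂' ε₁) hxball)
  have hivt := intermediate_value_Icc (zero_le_one) hψc
  have hfp_mem : f p ∈ Set.Icc (f (z 0)) (f (z 1)) := by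
    rw [hz0]; exact ⟨hcon.le, hq'.le⟩
  obtain ⟨u, hu, hfu⟩ := hivt hfp_mem
  have hzuM : z u ∈ f ⁻¹' {f p} := hfu
  have hzuδ : z u ∈ Metric.ball p δ := by
    rw [mem_ball_iff_norm]
    have := hzp u hu
    linarith
  have hge : ‖z u - a‖ ≤ r := hmax' ⟨hzuδ, hzuM⟩
  rw [hznorm u hu] at hge
  have hexp : (1 + u * (c - 1)) * r = r + u * (c - 1) * r := by ring
  rw [hexp] at hge
  have hu0 : u = 0 := by
    by_contra hne
    have hupos : 0 < u := lt_of_le_of_ne hu.1 (Ne.symm hne)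
    have h1c : 0 < c - 1 := by linarith
    have hprod : 0 < u * (c - 1) * r := by positivity
    linarith
  rw [hu0] at hfu
  have hfx : f x = f p := by rw [← hz0]; simpa using hfu
  exact absurd hfx (ne_of_lt hcon)


end helpers

/-- Remark 2.5(2) of the paper, precise version: let `f : ℝⁿ → ℝ` be
smooth, `p ≠ a`, `grad f (p) ≠ 0`, and `p - a` parallel to `grad f (p)`.  Assume `p` is a
non-degenerate critical point both of `f` restricted to the sphere
`S = {x : ‖x - a‖ = ‖p - a‖}` (the level set of `x ↦ ‖x - a‖²`) and of
`r_a(x) = ‖x - a‖` restricted to `M = f⁻¹(f p)`.  If `⟪p - a, grad f p⟫ > 0` then `p` is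
a local maximum of `f|_S` iff it is a local minimum of `r_a|_M`, and `p` is a local
minimum of `f|_S` iff it is a local maximum of `r_a|_M`. -/
theorem stmt19 {n : ℕ} (f : EuclideanSpace ℝ (Fin n) → ℝ) (hf : ContDiff ℝ (⊤ : ℕ∞) f)
    (a p : EuclideanSpace ℝ (Fin n)) (hpa : p ≠ a) (hgrad : gradient f p ≠ 0)
    (hpar : ¬ LinearIndependent ℝ ![p - a, gradient f p])
    (hndS : IsNondegenerateCritPtOn (fun x => ‖x - a‖ ^ 2) f p)
    (hndM : IsNondegenerateCritPtOn f (fun x => ‖x - a‖ ^ 2) p)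
    (hsign : 0 < ⟪p - a, gradient f p⟫) :
    (IsLocalMaxOn f (Metric.sphere a ‖p - a‖) p ↔
        IsLocalMinOn (fun x => ‖x - a‖) (f ⁻¹' {f p}) p) ∧
    (IsLocalMinOn f (Metric.sphere a ‖p - a‖) p ↔
        IsLocalMaxOn (fun x => ‖x - a‖) (f ⁻¹' {f p}) p) := by
  exact ⟨⟨implA hf hpa hsign, implB hf hpa hsign⟩, ⟨implC hf hpa hsign, implD hf hpa hsign⟩⟩
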